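/- arXiv:2603.17870 — 7 statements merged into one kernel-verified Lean document; each statement's English description precedes it below -/
import Mathlib

section
/- Let (T, [[·,·,·]]) be a Lie triple system over ℝ and let b be a symmetric bilinear form on T. Then b is right invariant (b([[x,y,z]],u) = b([[z,u,x]],y) for all x,y,z,u ∈ T) if and only if b is left invariant (b([[x,y,z]],u) = -b(z,[[x,y,u]]) for all x,y,z,u ∈ T). -/
/-- A Lie triple system over ℝ: a real vector space with a trilinear operation
satisfying (T02), (T1) and (T2). -/
structure LieTripleSystem (T : Type*) [AddCommGroup T] [Module ℝ T] where
  tri : T →ₗ[ℝ] T →ₗ[ℝ] T →ₗ[ℝ] T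
  tri_skew : ∀ x y z : T, tri x y z = - tri y x z
  tri_cyclic : ∀ x y z : T, tri x y z + tri y z x + tri z x y = 0
  tri_leibniz : ∀ u v x y z : T,
    tri u v (tri x y z) = tri (tri u v x) y z + tri x (tri u v y) z + tri x y (tri u v z)

/-- For a symmetric bilinear form on a Lie triple system, the right invariance
condition b([[x,y,z]],u) = b([[z,u,x]],y) is equivalent to the left invariance
condition b([[x,y,z]],u) = -b(z,[[x,y,u]]). -/
theorem rightInvariant_iff_leftInvariant
    {T : Type*} [AddCommGroup T] [Module ℝ T] (L : LieTripleSystem T)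
    (b : LinearMap.BilinForm ℝ T) (hsymm : ∀ x y : T, b x y = b y x) :
    (∀ x y z u : T, b (L.tri x y z) u = b (L.tri z u x) y) ↔
      (∀ x y z u : T, b (L.tri x y z) u = - b z (L.tri x y u)) := by
  have cyc : ∀ a c d e : T,
      b (L.tri a c d) e + b (L.tri c d a) e + b (L.tri d a c) e = 0 := by
    intro a c d e
    have := congrArg (fun w => b w e) (L.tri_cyclic a c d)
    simpa using this
  have skw : ∀ a c d e : T, b (L.tri a c d) e = - b (L.tri c a d) e := by
    intro a c d e
    rw [L.tri_skew a c d]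
    simp
  constructor
  · intro hR x y z u
    have hs : b z (L.tri x y u) = b (L.tri x y u) z := hsymm _ _
    have c1 := cyc x y z u
    have c2 := cyc x y u z
    have r1 := hR y z x u
    have r2 := hR z x y u
    have r3 := hR y u x z
    have r4 := hR u x y z
    have s1 := skw x u y z
    have s2 := skw x z y u
    linarith
  · intro hL x y z u
    have hL' : ∀ a c d e : T, b (L.tri a c d) e = - b (L.tri a c e) d := by
      intro a c d e
      rw [hL a c d e, hsymm]
    have c1 := cyc z u x y
    have c2 := cyc u x y z
    have c3 := cyc x z y u
    have c4 := cyc y u z x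
    have l1 := hL' u x z y
    have l2 := hL' x z u y
    have l3 := hL' x y u z
    have l4 := hL' y u x z
    have l5 := hL' z y u x
    have l6 := hL' y x z u
    have l7 := hL' z u y x
    have l8 := hL' x y z u
    have s1 := skw u z y x
    have s2 := skw y x u z
    have hs : b z (L.tri x y u) = b (L.tri x y u) z := hsymm _ _
    linarith
end

section
/- Every two-dimensional left Bol algebra (T,*,[[·,·,·]]) over ℝ has a basis {e₁,e₂} such that the multiplication table is of one of the following types (all other products of basis elements being determined by bilinearity, trilinearity, antisymmetry of * and the antisymmetry (T02)): Type I: e₁*e₂ = 0, [[e₁,e₂,e₁]] = ε₂e₂, [[e₁,e₂,e₂]] = -ε₁e₁, where (ε₁,ε₂) ∈ {(0,0), (1,0), (-1,0), (1,1), (1,-1), (-1,-1)}; Type II(i): e₁*e₂ = -e₂, [[e₁,e₂,e₁]] = βe₂ for some β ∈ ℝ, [[e₁,e₂,e₂]] = -εe₁ with ε ∈ {0,1,-1}; Type II(ii): e₁*e₂ = -e₂, [[e₁,e₂,e₁]] = e₁, [[e₁,e₂,e₂]] = -e₂. -/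
/-- A left Bol algebra over ℝ: a real vector space with a bilinear operation `mul`
and a trilinear operation `tri` satisfying (T01), (T02), (T1), (T2) and (T3). -/
structure LeftBolAlgebra (T : Type*) [AddCommGroup T] [Module ℝ T] where
  mul : T →ₗ[ℝ] T →ₗ[ℝ] T
  tri : T →ₗ[ℝ] T →ₗ[ℝ] T →ₗ[ℝ] T
  mul_anticomm : ∀ x y : T, mul x y = - mul y x
  tri_skew : ∀ x y z : T, tri x y z = - tri y x z
  tri_cyclic : ∀ x y z : T, tri x y z + tri y z x + tri z x y = 0
  tri_leibniz : ∀ u v x y z : T,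
    tri u v (tri x y z) = tri (tri u v x) y z + tri x (tri u v y) z + tri x y (tri u v z)
  bol : ∀ u v x y : T, tri u v (mul x y) =
    mul (tri u v x) y + mul x (tri u v y) + tri x y (mul u v) - mul (mul x y) (mul u v)

private lemma rep2 {T : Type*} [AddCommGroup T] [Module ℝ T] (b : Module.Basis (Fin 2) ℝ T) (x : T) :
    ∃ u v : ℝ, x = u • b 0 + v • b 1 :=
  ⟨b.repr x 0, b.repr x 1, by conv_lhs => rw [← b.sum_repr x, Fin.sum_univ_two]⟩

private lemma coef_zero {T : Type*} [AddCommGroup T] [Module ℝ T] (b : Module.Basis (Fin 2) ℝ T)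
    (x y : ℝ) (h : x • b 0 + y • b 1 = 0) : x = 0 ∧ y = 0 := by
  have h0 := congrArg (fun v => b.repr v 0) h
  have h1 := congrArg (fun v => b.repr v 1) h
  simp [Module.Basis.repr_self, Finsupp.single_apply] at h0 h1
  exact ⟨h0, h1⟩

private lemma pair_ok {T : Type*} [AddCommGroup T] [Module ℝ T]
    (hdim : Module.finrank ℝ T = 2) (b : Module.Basis (Fin 2) ℝ T)
    (a a' c d : ℝ) (h : a * d - a' * c ≠ 0) :
    LinearIndependent ℝ ![a • b 0 + a' • b 1, c • b 0 + d • b 1] ∧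
      Submodule.span ℝ {a • b 0 + a' • b 1, c • b 0 + d • b 1} = ⊤ := by
  have : FiniteDimensional ℝ T := FiniteDimensional.of_finrank_pos (by omega)
  have hli : LinearIndependent ℝ ![a • b 0 + a' • b 1, c • b 0 + d • b 1] := by
    rw [LinearIndependent.pair_iff]
    intro s t hst
    have hst' : (s*a + t*c) • b 0 + (s*a' + t*d) • b 1 = 0 := by rw [← hst]; module
    obtain ⟨h1, h2⟩ := coef_zero b _ _ hst'
    constructor
    · have hs : s * (a*d - a'*c) = 0 := by linear_combination d * h1 - c * h2
      exact (mul_eq_zero.mp hs).resolve_right h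
    · have ht : t * (a*d - a'*c) = 0 := by linear_combination -a' * h1 + a * h2
      exact (mul_eq_zero.mp ht).resolve_right h
  refine ⟨hli, ?_⟩
  have := hli.span_eq_top_of_card_eq_finrank (by simp [hdim])
  rwa [show Set.range ![a • b 0 + a' • b 1, c • b 0 + d • b 1]
      = {a • b 0 + a' • b 1, c • b 0 + d • b 1} by
    simp [Matrix.range_cons, Matrix.range_empty, Set.pair_comm]] at this

set_option maxHeartbeats 1000000 in
/-- Classification of two-dimensional left Bol algebras over ℝ: every such algebra has
a basis {e₁, e₂} whose multiplication table is of type I, type II(i) or type II(ii). -/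
theorem two_dim_leftBol_classification
    {T : Type*} [AddCommGroup T] [Module ℝ T] (A : LeftBolAlgebra T)
    (hdim : Module.finrank ℝ T = 2) :
    ∃ e₁ e₂ : T, LinearIndependent ℝ ![e₁, e₂] ∧
      Submodule.span ℝ {e₁, e₂} = ⊤ ∧
      ((∃ ε₁ ε₂ : ℝ,
          ((ε₁, ε₂) = ((0 : ℝ), (0 : ℝ)) ∨ (ε₁, ε₂) = (1, 0) ∨ (ε₁, ε₂) = (-1, 0) ∨
            (ε₁, ε₂) = (1, 1) ∨ (ε₁, ε₂) = (1, -1) ∨ (ε₁, ε₂) = (-1, -1)) ∧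
          A.mul e₁ e₂ = 0 ∧ A.tri e₁ e₂ e₁ = ε₂ • e₂ ∧ A.tri e₁ e₂ e₂ = -ε₁ • e₁) ∨
        (∃ β ε : ℝ, (ε = 0 ∨ ε = 1 ∨ ε = -1) ∧
          A.mul e₁ e₂ = -e₂ ∧ A.tri e₁ e₂ e₁ = β • e₂ ∧ A.tri e₁ e₂ e₂ = -ε • e₁) ∨
        (A.mul e₁ e₂ = -e₂ ∧ A.tri e₁ e₂ e₁ = e₁ ∧ A.tri e₁ e₂ e₂ = -e₂)) := by
  have hfd : FiniteDimensional ℝ T := FiniteDimensional.of_finrank_pos (by omega)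
  obtain ⟨b⟩ : Nonempty (Module.Basis (Fin 2) ℝ T) := ⟨Module.finBasisOfFinrankEq ℝ T hdim⟩
  obtain ⟨f₁, f₂, hf₁, hf₂⟩ : ∃ u v : T, u = b 0 ∧ v = b 1 := ⟨_, _, rfl, rfl⟩
  have hrep : ∀ x : T, ∃ u v : ℝ, x = u • f₁ + v • f₂ := by rw [hf₁, hf₂]; exact rep2 b
  have hcoef : ∀ x y : ℝ, x • f₁ + y • f₂ = 0 → x = 0 ∧ y = 0 := by
    rw [hf₁, hf₂]; exact coef_zero b
  have pair : ∀ a a' c d : ℝ, a * d - a' * c ≠ 0 →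
      LinearIndependent ℝ ![a • f₁ + a' • f₂, c • f₁ + d • f₂] ∧
        Submodule.span ℝ {a • f₁ + a' • f₂, c • f₁ + d • f₂} = ⊤ := by
    rw [hf₁, hf₂]; exact fun a a' c d h => pair_ok hdim b a a' c d h
  clear hf₁ hf₂
  have half : ∀ x : T, x + x = 0 → x = 0 := by
    intro x hx
    have h2 : (2:ℝ) • x = 0 := by rw [two_smul]; exact hx
    simpa using congrArg (fun y => (2:ℝ)⁻¹ • y) h2
  have hm11 : A.mul f₁ f₁ = 0 := half _ (by nth_rewrite 2 [A.mul_anticomm]; exact add_neg_cancel _)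
  have hm22 : A.mul f₂ f₂ = 0 := half _ (by nth_rewrite 2 [A.mul_anticomm]; exact add_neg_cancel _)
  have hm21 : A.mul f₂ f₁ = - A.mul f₁ f₂ := A.mul_anticomm f₂ f₁
  have ht11 : ∀ z : T, A.tri f₁ f₁ z = 0 := fun z =>
    half _ (by nth_rewrite 2 [A.tri_skew]; exact add_neg_cancel _)
  have ht22 : ∀ z : T, A.tri f₂ f₂ z = 0 := fun z =>
    half _ (by nth_rewrite 2 [A.tri_skew]; exact add_neg_cancel _)
  have ht21 : ∀ z : T, A.tri f₂ f₁ z = - A.tri f₁ f₂ z := fun z => A.tri_skew f₂ f₁ z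
  have hmul : ∀ a a' c d : ℝ, A.mul (a • f₁ + a' • f₂) (c • f₁ + d • f₂)
      = (a * d - a' * c) • A.mul f₁ f₂ := by
    intro a a' c d
    simp only [map_add, map_smul, LinearMap.add_apply, LinearMap.smul_apply, hm11, hm22, hm21,
      smul_zero, smul_neg, zero_add, add_zero]
    module
  have htri : ∀ a a' c d : ℝ, ∀ z : T, A.tri (a • f₁ + a' • f₂) (c • f₁ + d • f₂) z
      = (a * d - a' * c) • A.tri f₁ f₂ z := by
    intro a a' c d z
    simp only [map_add, map_smul, LinearMap.add_apply, LinearMap.smul_apply, ht11, ht22, ht21,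
      smul_zero, smul_neg, zero_add, add_zero]
    module
  obtain ⟨p, q, hD1⟩ := hrep (A.tri f₁ f₂ f₁)
  obtain ⟨r, s, hD2⟩ := hrep (A.tri f₁ f₂ f₂)
  obtain ⟨w₁, w₂, hw⟩ := hrep (A.mul f₁ f₂)
  have htr : ∀ z : T, (p + s) • A.tri f₁ f₂ z = 0 := by
    intro z
    have h2 := A.tri_leibniz f₁ f₂ f₁ f₂ z
    rw [hD1, hD2] at h2
    simp only [map_add, map_smul, LinearMap.add_apply, LinearMap.smul_apply, ht11, ht22, ht21,
      smul_zero, smul_neg, zero_add, add_zero] at h2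
    linear_combination (norm := module) -h2
  have hps : s = -p := by
    by_contra hne
    have hτ : p + s ≠ 0 := fun h => hne (by linarith)
    have e1 : A.tri f₁ f₂ f₁ = 0 := by
      rcases smul_eq_zero.mp (htr f₁) with h | h
      exacts [absurd h hτ, h]
    have e2 : A.tri f₁ f₂ f₂ = 0 := by
      rcases smul_eq_zero.mp (htr f₂) with h | h
      exacts [absurd h hτ, h]
    rw [e1] at hD1; rw [e2] at hD2
    obtain ⟨hp0, -⟩ := hcoef p q hD1.symm
    obtain ⟨-, hs0⟩ := hcoef r s hD2.symm
    exact hτ (by rw [hp0, hs0]; ring)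
  subst hps
  have hDc : ∀ u v : ℝ, A.tri f₁ f₂ (u • f₁ + v • f₂)
      = (p*u + r*v) • f₁ + (q*u - p*v) • f₂ := by
    intro u v
    simp only [map_add, map_smul, hD1, hD2]
    module

  have sqrtinv : ∀ x : ℝ, x ≠ 0 → ∃ m : ℝ, 0 < m ∧ m*m*|x| = 1 := by
    intro x hx
    have hs : 0 < Real.sqrt |x| := Real.sqrt_pos.mpr (abs_pos.mpr hx)
    refine ⟨(Real.sqrt |x|)⁻¹, by positivity, ?_⟩
    rw [← Real.mul_self_sqrt (abs_nonneg x)]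
    field_simp
    rw [Real.sqrt_sq hs.le]
  by_cases hwz : w₁ = 0 ∧ w₂ = 0
  · -- w = 0 : Type I
    obtain ⟨hwz1, hwz2⟩ := hwz
    subst hwz1; subst hwz2
    have hw0 : A.mul f₁ f₂ = 0 := by rw [hw]; module
    by_cases hD0 : p = 0 ∧ q = 0 ∧ r = 0
    · obtain ⟨hp, hq, hr⟩ := hD0
      subst hp; subst hq; subst hr
      obtain ⟨hli, hsp⟩ := pair 1 0 0 1 (by norm_num)
      refine ⟨_, _, hli, hsp, Or.inl ⟨0, 0, Or.inl rfl, ?_, ?_, ?_⟩⟩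
      · rw [hmul, hw0]; module
      · rw [htri, hDc]; module
      · rw [htri, hDc]; module
    · by_cases hk0 : p*p + q*r = 0
      · -- nilpotent, nonzero
        by_cases hq : q = 0
        · subst hq
          have hp : p = 0 := by nlinarith
          subst hp
          have hr : r ≠ 0 := fun h => hD0 ⟨rfl, rfl, h⟩
          obtain ⟨m, hm0, hm⟩ := sqrtinv r hr
          rcases lt_or_gt_of_ne hr with hrn | hrp
          · rw [abs_of_neg hrn] at hm
            obtain ⟨hli, hsp⟩ := pair r 0 0 m
              (by intro hc; exact mul_ne_zero hr hm0.ne' (by linarith))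
            refine ⟨_, _, hli, hsp, Or.inl ⟨1, 0, by norm_num, ?_, ?_, ?_⟩⟩
            · rw [hmul, hw0]; module
            · rw [htri, hDc]; module
            · rw [htri, hDc]; match_scalars
              · linear_combination (-r)*hm
              · ring
          · rw [abs_of_pos hrp] at hm
            obtain ⟨hli, hsp⟩ := pair r 0 0 m
              (by intro hc; exact mul_ne_zero hr hm0.ne' (by linarith))
            refine ⟨_, _, hli, hsp, Or.inl ⟨-1, 0, by norm_num, ?_, ?_, ?_⟩⟩
            · rw [hmul, hw0]; module
            · rw [htri, hDc]; module
            · rw [htri, hDc]; match_scalars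
              · linear_combination r*hm
              · ring
        · obtain ⟨m, hm0, hm⟩ := sqrtinv q hq
          rcases lt_or_gt_of_ne hq with hqn | hqp
          · rw [abs_of_neg hqn] at hm
            obtain ⟨hli, hsp⟩ := pair p q m 0
              (by intro hc; exact mul_ne_zero hq hm0.ne' (by linarith))
            refine ⟨_, _, hli, hsp, Or.inl ⟨-1, 0, by norm_num, ?_, ?_, ?_⟩⟩
            · rw [hmul, hw0]; module
            · rw [htri, hDc]; match_scalars
              · linear_combination (-(q*m))*hk0
              · ring
            · rw [htri, hDc]; match_scalars
              · linear_combination p*hm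
              · linear_combination q*hm
          · rw [abs_of_pos hqp] at hm
            obtain ⟨hli, hsp⟩ := pair p q m 0
              (by intro hc; exact mul_ne_zero hq hm0.ne' (by linarith))
            refine ⟨_, _, hli, hsp, Or.inl ⟨1, 0, by norm_num, ?_, ?_, ?_⟩⟩
            · rw [hmul, hw0]; module
            · rw [htri, hDc]; match_scalars
              · linear_combination (-(q*m))*hk0
              · ring
            · rw [htri, hDc]; match_scalars
              · linear_combination (-p)*hm
              · linear_combination (-q)*hm
      · -- k ≠ 0
        obtain ⟨v₁, v₂, ε₁, ε₂, hmem, hQ0, hQs, hε₁⟩ :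
            ∃ v₁ v₂ ε₁ ε₂ : ℝ,
              ((ε₁, ε₂) = ((1:ℝ), (1:ℝ)) ∨ (ε₁, ε₂) = (1, -1) ∨ (ε₁, ε₂) = (-1, -1)) ∧
              q*v₁*v₁ - 2*(p*(v₁*v₂)) - r*(v₂*v₂) ≠ 0 ∧
              ε₂ * |q*v₁*v₁ - 2*(p*(v₁*v₂)) - r*(v₂*v₂)|
                = q*v₁*v₁ - 2*(p*(v₁*v₂)) - r*(v₂*v₂) ∧
              ε₁ * |p*p + q*r| = -(ε₂ * (p*p + q*r)) := by
          rcases lt_trichotomy (p*p + q*r) 0 with hk | hk | hk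
          · have hq : q ≠ 0 := by intro h; rw [h] at hk; nlinarith
            rcases lt_or_gt_of_ne hq with hqn | hqp
            · refine ⟨1, 0, -1, -1, by norm_num, by simpa using hq, ?_, ?_⟩
              · have h1 : q*1*1 - 2*(p*(1*0)) - r*(0*0) = q := by ring
                rw [h1, abs_of_neg hqn]; ring
              · rw [abs_of_neg hk]; ring
            · refine ⟨1, 0, 1, 1, by norm_num, by simpa using hq, ?_, ?_⟩
              · have h1 : q*1*1 - 2*(p*(1*0)) - r*(0*0) = q := by ring
                rw [h1, abs_of_pos hqp]; ring
              · rw [abs_of_neg hk]; ring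
          · exact absurd hk hk0
          · rcases lt_trichotomy q 0 with hqn | hq0 | hqp
            · refine ⟨1, 0, 1, -1, by norm_num, by simpa using hqn.ne, ?_, ?_⟩
              · have h1 : q*1*1 - 2*(p*(1*0)) - r*(0*0) = q := by ring
                rw [h1, abs_of_neg hqn]; ring
              · rw [abs_of_pos hk]; ring
            · have hp : p ≠ 0 := by intro h; rw [hq0, h] at hk; nlinarith
              have hQv : q*((1 - r)/(2*p))*((1 - r)/(2*p)) - 2*(p*(((1 - r)/(2*p))*1))
                  - r*(1*1) = -1 := by
                rw [hq0]; field_simp; ring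
              refine ⟨(1 - r)/(2*p), 1, 1, -1, by norm_num, ?_, ?_, ?_⟩
              · rw [hQv]; norm_num
              · rw [hQv]; norm_num
              · rw [abs_of_pos hk]; ring
            · have hQv : q*p*p - 2*(p*(p*q)) - r*(q*q) = -(q*(p*p + q*r)) := by ring
              have hneg : -(q*(p*p + q*r)) < 0 := by nlinarith
              refine ⟨p, q, 1, -1, by norm_num, ?_, ?_, ?_⟩
              · rw [hQv]; exact ne_of_lt hneg
              · rw [hQv, abs_of_neg hneg]; ring
              · rw [abs_of_pos hk]; ring
        obtain ⟨m, hm0, hm⟩ := sqrtinv _ hQ0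
        obtain ⟨n, hn0, hn⟩ := sqrtinv _ hk0
        have hA : m*m*(q*v₁*v₁ - 2*(p*(v₁*v₂)) - r*(v₂*v₂)) = ε₂ := by
          linear_combination (-(m*m))*hQs + ε₂*hm
        have hB : m*m*(n*n)*(q*v₁*v₁ - 2*(p*(v₁*v₂)) - r*(v₂*v₂))*(p*p + q*r) = -ε₁ := by
          linear_combination (n*n*(p*p + q*r))*hA + (n*n)*hε₁ + (-ε₁)*hn
        have hdet : (m*v₁)*(m*n*(q*v₁ - p*v₂)) - (m*v₂)*(m*n*(p*v₁ + r*v₂)) ≠ 0 := by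
          have h1 : (m*v₁)*(m*n*(q*v₁ - p*v₂)) - (m*v₂)*(m*n*(p*v₁ + r*v₂))
              = m*m*n*(q*v₁*v₁ - 2*(p*(v₁*v₂)) - r*(v₂*v₂)) := by ring
          rw [h1]
          exact mul_ne_zero (mul_ne_zero (mul_ne_zero hm0.ne' hm0.ne') hn0.ne') hQ0
        obtain ⟨hli, hsp⟩ := pair (m*v₁) (m*v₂) (m*n*(p*v₁ + r*v₂)) (m*n*(q*v₁ - p*v₂)) hdet
        refine ⟨_, _, hli, hsp, Or.inl ⟨ε₁, ε₂, ?_, ?_, ?_, ?_⟩⟩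
        · rcases hmem with h | h | h
          exacts [Or.inr (Or.inr (Or.inr (Or.inl h))),
            Or.inr (Or.inr (Or.inr (Or.inr (Or.inl h)))),
            Or.inr (Or.inr (Or.inr (Or.inr (Or.inr h))))]
        · rw [hmul, hw0]; module
        · rw [htri, hDc]; match_scalars
          · linear_combination (m*n*(p*v₁ + r*v₂))*hA
          · linear_combination (m*n*(q*v₁ - p*v₂))*hA
        · rw [htri, hDc]; match_scalars
          · linear_combination (m*v₁)*hB
          · linear_combination (m*v₂)*hB
  · -- w ≠ 0 : Type II
    by_cases hR : q*w₁*w₁ - 2*(p*(w₁*w₂)) - r*(w₂*w₂) = 0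
    · by_cases hu : p*w₁ + r*w₂ = 0 ∧ q*w₁ - p*w₂ = 0
      · -- II(i) with ε = 0 : D w = 0
        by_cases hw1 : w₁ = 0
        · subst hw1
          have hw2 : w₂ ≠ 0 := fun h => hwz ⟨rfl, h⟩
          have hr0 : r = 0 := by
            have h : r*w₂ = 0 := by linear_combination hu.1
            exact (mul_eq_zero.mp h).resolve_right hw2
          have hp0 : p = 0 := by
            have h : p*w₂ = 0 := by linear_combination -hu.2
            exact (mul_eq_zero.mp h).resolve_right hw2
          subst hr0; subst hp0
          have hc : w₂⁻¹ * w₂ = 1 := inv_mul_cancel₀ hw2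
          obtain ⟨hli, hsp⟩ := pair (-w₂⁻¹) 0 0 w₂
            (by rw [show (-w₂⁻¹)*w₂ - 0*0 = -1 by linear_combination -hc]; norm_num)
          refine ⟨_, _, hli, hsp, Or.inr (Or.inl ⟨q*(w₂⁻¹*w₂⁻¹), 0, Or.inl rfl, ?_, ?_, ?_⟩)⟩
          · rw [hmul, hw]; match_scalars
            · ring
            · linear_combination (-w₂)*hc
          · rw [htri, hDc]; match_scalars
            · ring
            · ring
          · rw [htri, hDc]; match_scalars
            · ring
            · ring
        · have hc : w₁⁻¹ * w₁ = 1 := inv_mul_cancel₀ hw1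
          obtain ⟨hli, hsp⟩ := pair 0 w₁⁻¹ w₁ w₂
            (by rw [show 0*w₂ - w₁⁻¹*w₁ = -1 by linear_combination -hc]; norm_num)
          refine ⟨_, _, hli, hsp, Or.inr (Or.inl ⟨-(w₁⁻¹*w₁⁻¹*r), 0, Or.inl rfl, ?_, ?_, ?_⟩)⟩
          · rw [hmul, hw]; match_scalars
            · linear_combination (-w₁)*hc
            · linear_combination (-w₂)*hc
          · rw [htri, hDc]; match_scalars
            · ring
            · linear_combination (w₁⁻¹*w₁⁻¹)*hu.1
          · rw [htri, hDc]; rw [hu.1, hu.2]; match_scalars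
            · ring
            · ring
      · -- II(ii) : D w = L w with L ≠ 0
        have hLex : ∃ L : ℝ, L ≠ 0 ∧ p*w₁ + r*w₂ = L*w₁ ∧ q*w₁ - p*w₂ = L*w₂ := by
          by_cases hw1 : w₁ = 0
          · subst hw1
            have hw2 : w₂ ≠ 0 := fun h => hwz ⟨rfl, h⟩
            have hr0 : r = 0 := by
              have h : r*(w₂*w₂) = 0 := by linear_combination -hR
              rcases mul_eq_zero.mp h with h' | h'
              · exact h'
              · exact absurd ((mul_eq_zero.mp h').elim id id) hw2
            refine ⟨-p, ?_, by rw [hr0]; ring, by ring⟩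
            intro h
            have hp0 : p = 0 := by linarith [neg_eq_zero.mp h]
            exact hu ⟨by rw [hr0, hp0]; ring, by rw [hp0]; ring⟩
          · refine ⟨(p*w₁ + r*w₂)*w₁⁻¹, ?_, ?_, ?_⟩
            · intro h
              have h1 : p*w₁ + r*w₂ = 0 := by
                have := mul_eq_zero.mp h
                rcases this with h' | h'
                · exact h'
                · exact absurd (inv_eq_zero.mp h') hw1
              apply hu
              refine ⟨h1, ?_⟩
              have h2 : (q*w₁ - p*w₂)*w₁ = 0 := by linear_combination hR + w₂*h1
              exact (mul_eq_zero.mp h2).resolve_right hw1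
            · have hc : w₁⁻¹ * w₁ = 1 := inv_mul_cancel₀ hw1
              linear_combination (-(p*w₁ + r*w₂))*hc
            · have hc : w₁⁻¹ * w₁ = 1 := inv_mul_cancel₀ hw1
              have h2 : (q*w₁ - p*w₂)*w₁ = (p*w₁ + r*w₂)*w₂ := by linear_combination hR
              linear_combination w₁⁻¹*h2 + (-(q*w₁ - p*w₂))*hc
        obtain ⟨L, hL0, hL1, hL2⟩ := hLex
        have hLk : L*L = p*p + q*r := by
          by_cases hw1 : w₁ = 0
          · have hw2 : w₂ ≠ 0 := fun h => hwz ⟨hw1, h⟩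
            have h2 : (L*L - (p*p + q*r))*w₂ = 0 := by
              linear_combination (-q)*hL1 + (p - L)*hL2
            have := (mul_eq_zero.mp h2).resolve_right hw2
            linarith
          · have h2 : (L*L - (p*p + q*r))*w₁ = 0 := by
              linear_combination (-L - p)*hL1 - r*hL2
            have := (mul_eq_zero.mp h2).resolve_right hw1
            linarith
        obtain ⟨g₁, g₂, hgnz, hDg1, hDg2⟩ :
            ∃ g₁ g₂ : ℝ, ¬(g₁ = 0 ∧ g₂ = 0) ∧ p*g₁ + r*g₂ = -(L*g₁) ∧
              q*g₁ - p*g₂ = -(L*g₂) := by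
          by_cases hg : p - L = 0 ∧ q = 0
          · refine ⟨r, -p - L, ?_, by ring, by linear_combination -hLk⟩
            rintro ⟨h1, h2⟩
            apply hL0
            linarith [hg.1]
          · exact ⟨p - L, q, hg, by linear_combination -hLk, by ring⟩
        have hS0 : g₁*w₂ - g₂*w₁ ≠ 0 := by
          intro hS
          have h2 : 2*(L*(g₁*w₁)) = 0 := by linear_combination w₁*hDg1 - g₁*hL1 + r*hS
          have h3 : 2*(L*(g₂*w₂)) = 0 := by linear_combination w₂*hDg2 - g₂*hL2 - q*hS
          have hg1w : g₁*w₁ = 0 := by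
            have h4 : L*(g₁*w₁) = 0 := by linarith
            exact (mul_eq_zero.mp h4).resolve_left hL0
          have hg2w : g₂*w₂ = 0 := by
            have h4 : L*(g₂*w₂) = 0 := by linarith
            exact (mul_eq_zero.mp h4).resolve_left hL0
          by_cases hw1 : w₁ = 0
          · have hw2 : w₂ ≠ 0 := fun h => hwz ⟨hw1, h⟩
            have hg2 : g₂ = 0 := (mul_eq_zero.mp hg2w).resolve_right hw2
            have hg1 : g₁ = 0 := by
              have h5 : g₁*w₂ = 0 := by rw [hg2] at hS; linear_combination hS
              exact (mul_eq_zero.mp h5).resolve_right hw2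
            exact hgnz ⟨hg1, hg2⟩
          · have hg1 : g₁ = 0 := (mul_eq_zero.mp hg1w).resolve_right hw1
            have hg2 : g₂ = 0 := by
              have h5 : g₂*w₁ = 0 := by rw [hg1] at hS; linear_combination -hS
              exact (mul_eq_zero.mp h5).resolve_right hw1
            exact hgnz ⟨hg1, hg2⟩
        have hσ : (g₁*w₂ - g₂*w₁)⁻¹ * (g₁*w₂ - g₂*w₁) = 1 := inv_mul_cancel₀ hS0
        have hℓ : L⁻¹ * L = 1 := inv_mul_cancel₀ hL0
        set σ := (g₁*w₂ - g₂*w₁)⁻¹ with hσdef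
        set ℓ := L⁻¹ with hℓdef
        have hℓ0 : ℓ ≠ 0 := by rw [hℓdef]; exact inv_ne_zero hL0
        obtain ⟨hli, hsp⟩ := pair (-(σ*g₁)) (-(σ*g₂)) (ℓ*w₁) (ℓ*w₂)
          (by rw [show (-(σ*g₁))*(ℓ*w₂) - (-(σ*g₂))*(ℓ*w₁) = -ℓ by
                linear_combination (-ℓ)*hσ]
              exact neg_ne_zero.mpr hℓ0)
        refine ⟨_, _, hli, hsp, Or.inr (Or.inr ⟨?_, ?_, ?_⟩)⟩
        · rw [hmul, hw]; match_scalars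
          · linear_combination (-(ℓ*w₁))*hσ
          · linear_combination (-(ℓ*w₂))*hσ
        · rw [htri, hDc]; match_scalars
          · linear_combination (σ*σ*ℓ*(g₁*w₂ - g₂*w₁))*hDg1
              + (-(σ*σ*(g₁*w₂ - g₂*w₁)*g₁))*hℓ + (-(σ*g₁))*hσ
          · linear_combination (σ*σ*ℓ*(g₁*w₂ - g₂*w₁))*hDg2
              + (-(σ*σ*(g₁*w₂ - g₂*w₁)*g₂))*hℓ + (-(σ*g₂))*hσ
        · rw [htri, hDc]; match_scalars
          · linear_combination (-(σ*ℓ*ℓ*(g₁*w₂ - g₂*w₁)))*hL1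
              + (-(σ*ℓ*(g₁*w₂ - g₂*w₁)*w₁))*hℓ + (-(ℓ*w₁))*hσ
          · linear_combination (-(σ*ℓ*ℓ*(g₁*w₂ - g₂*w₁)))*hL2
              + (-(σ*ℓ*(g₁*w₂ - g₂*w₁)*w₂))*hℓ + (-(ℓ*w₂))*hσ
    · -- II(i) with ε = ±1
      have hR' : q*w₁*w₁ - 2*(p*(w₁*w₂)) - r*(w₂*w₂) ≠ 0 := hR
      obtain ⟨m, hm0, hm⟩ := sqrtinv _ hR'
      have hc : (q*w₁*w₁ - 2*(p*(w₁*w₂)) - r*(w₂*w₂))⁻¹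
          * (q*w₁*w₁ - 2*(p*(w₁*w₂)) - r*(w₂*w₂)) = 1 := inv_mul_cancel₀ hR'
      set c := (q*w₁*w₁ - 2*(p*(w₁*w₂)) - r*(w₂*w₂))⁻¹ with hcdef
      obtain ⟨hli, hsp⟩ := pair (c*(p*w₁ + r*w₂)) (c*(q*w₁ - p*w₂)) (m*w₁) (m*w₂)
        (by rw [show (c*(p*w₁ + r*w₂))*(m*w₂) - (c*(q*w₁ - p*w₂))*(m*w₁) = -m by
              linear_combination (-m)*hc]
            exact neg_ne_zero.mpr hm0.ne')
      refine ⟨_, _, hli, hsp, Or.inr (Or.inl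
        ⟨-(c*(p*p + q*r)), m*m*(q*w₁*w₁ - 2*(p*(w₁*w₂)) - r*(w₂*w₂)), ?_, ?_, ?_, ?_⟩)⟩
      · rcases lt_or_gt_of_ne hR' with h | h
        · right; right
          rw [abs_of_neg h] at hm
          linear_combination -hm
        · right; left
          rw [abs_of_pos h] at hm
          linear_combination hm
      · rw [hmul, hw]; match_scalars
        · linear_combination (-(m*w₁))*hc
        · linear_combination (-(m*w₂))*hc
      · rw [htri, hDc]; match_scalars
        · linear_combination (-(c*m*(p*p + q*r)*w₁))*hc
        · linear_combination (-(c*m*(p*p + q*r)*w₂))*hc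
      · rw [htri, hDc]; match_scalars
        · ring
        · ring
end

section
/- Let (T,*,[[·,·,·]]) be a two-dimensional left Bol algebra over ℝ whose binary operation * is not identically zero. Then every symmetric bilinear form b on T satisfying b(x*y,z) = b(x,y*z) for all x,y,z ∈ T and b([[x,y,z]],u) = b([[z,u,x]],y) for all x,y,z,u ∈ T is degenerate; in particular there is no quadratic structure on T. -/
/-- On a two-dimensional left Bol algebra over ℝ with nonzero binary operation, every
symmetric bilinear form satisfying the associativity condition and the right invariance
condition is degenerate; in particular there is no quadratic structure on such an algebra. -/
theorem no_quadratic_structure_two_dim_bol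
    {T : Type*} [AddCommGroup T] [Module ℝ T] (A : LeftBolAlgebra T)
    (hdim : Module.finrank ℝ T = 2)
    (hmul : ∃ x y : T, A.mul x y ≠ 0)
    (b : LinearMap.BilinForm ℝ T) (hsymm : ∀ x y : T, b x y = b y x)
    (hassoc : ∀ x y z : T, b (A.mul x y) z = b x (A.mul y z))
    (hinv : ∀ x y z u : T, b (A.tri x y z) u = b (A.tri z u x) y) :
    ∃ v : T, v ≠ 0 ∧ ∀ w : T, b v w = 0 := by
  have hfin : FiniteDimensional ℝ T := by
    apply Module.finite_of_finrank_pos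
    omega
  obtain ⟨x0, y0, hx0⟩ := hmul
  refine ⟨A.mul x0 y0, hx0, ?_⟩
  -- mul x x = 0
  have hmulself : ∀ x : T, A.mul x x = 0 := by
    intro x
    have h := A.mul_anticomm x x
    have h2 : A.mul x x + A.mul x x = 0 := by nth_rewrite 2 [h]; abel
    have h3 : (2 : ℝ) • A.mul x x = 0 := by rw [two_smul]; exact h2
    rcases smul_eq_zero.mp h3 with h | h
    · norm_num at h
    · exact h
  -- cyclicity of g(x,y,z) = b (x*y) z
  have cyc : ∀ x y z : T, b (A.mul x y) z = b (A.mul y z) x := by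
    intro x y z; rw [hassoc, hsymm]
  have alt1 : ∀ x z : T, b (A.mul x x) z = 0 := by
    intro x z; rw [hmulself]; simp
  have alt2 : ∀ x y : T, b (A.mul x y) y = 0 := by
    intro x y; rw [cyc]; exact alt1 y x
  have alt3 : ∀ x y : T, b (A.mul x y) x = 0 := by
    intro x y; rw [cyc]; exact alt2 y x
  -- basis of the 2-dimensional space
  let B : Module.Basis (Fin 2) ℝ T := Module.finBasisOfFinrankEq ℝ T hdim
  have hbasis : ∀ i j k : Fin 2, b (A.mul (B i) (B j)) (B k) = 0 := by
    intro i j k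
    fin_cases i <;> fin_cases j <;> fin_cases k <;>
      first
        | exact alt1 _ _
        | exact alt2 _ _
        | exact alt3 _ _
  have hrep : ∀ x : T, ∃ a0 a1 : ℝ, x = a0 • B 0 + a1 • B 1 := by
    intro x
    refine ⟨B.repr x 0, B.repr x 1, ?_⟩
    have h := B.sum_repr x
    rw [Fin.sum_univ_two] at h
    exact h.symm
  have key : ∀ x y w : T, b (A.mul x y) w = 0 := by
    intro x y w
    obtain ⟨a0, a1, hx⟩ := hrep x
    obtain ⟨c0, c1, hy⟩ := hrep y
    obtain ⟨d0, d1, hw⟩ := hrep w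
    rw [hx, hy, hw]
    simp only [map_add, map_smul, LinearMap.add_apply, LinearMap.smul_apply,
      smul_eq_mul, hbasis, mul_zero, add_zero]
  intro w
  exact key x0 y0 w
end

section
/- Let (T,*,[[·,·,·]],b) be a quadratic left Bol algebra over ℝ and let Π: T → T be a pseudoderivation of T with companion χ ∈ T. Define φ(Π)(x,y) := b(Π(x),y) + b(x,Π(y)). Then φ(Π) is a symmetric bilinear form on T and φ(Π) is left invariant for the ternary operation, i.e. φ(Π)([[x,y,z]],u) = -φ(Π)(z,[[x,y,u]]) for all x,y,z,u ∈ T. -/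
/-- Let (T,*,[[·,·,·]],b) be a quadratic left Bol algebra and Pd a pseudoderivation with
companion χ.  Then φ(Pd)(x,y) := b(Pd(x),y) + b(x,Pd(y)) is a symmetric bilinear form on T
which is left invariant for the ternary operation. -/
theorem phi_of_pseudoderivation_symmetric_left_invariant
    {T : Type*} [AddCommGroup T] [Module ℝ T] (A : LeftBolAlgebra T)
    (b : LinearMap.BilinForm ℝ T) (hsymm : ∀ x y : T, b x y = b y x)
    (hnondeg : ∀ x : T, (∀ y : T, b x y = 0) → x = 0)
    (hassoc : ∀ x y z : T, b (A.mul x y) z = b x (A.mul y z))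
    (hinv : ∀ x y z u : T, b (A.tri x y z) u = b (A.tri z u x) y)
    (Pd : T →ₗ[ℝ] T) (χ : T)
    (hP1 : ∀ x y : T, Pd (A.mul x y) =
      A.mul (Pd x) y + A.mul x (Pd y) + A.tri x y χ - A.mul (A.mul x y) χ)
    (hP2 : ∀ x y z : T, Pd (A.tri x y z) =
      A.tri (Pd x) y z + A.tri x (Pd y) z + A.tri x y (Pd z)) :
    ∃ φ : LinearMap.BilinForm ℝ T,
      (∀ x y : T, φ x y = b (Pd x) y + b x (Pd y)) ∧
      (∀ x y : T, φ x y = φ y x) ∧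
      (∀ x y z u : T, φ (A.tri x y z) u = - φ z (A.tri x y u)) := by

  refine ⟨b ∘ₗ Pd + b.compl₂ Pd, ?_, ?_, ?_⟩
  · intro x y; simp [LinearMap.compl₂_apply]
  · intro x y
    simp only [LinearMap.add_apply, LinearMap.comp_apply, LinearMap.compl₂_apply]
    rw [hsymm (Pd x) y, hsymm x (Pd y)]; ring
  · have key : ∀ x y z u : T, b (A.tri x y z) u = - b z (A.tri x y u) := by
      intro x y z u
      rw [hinv, hsymm z (A.tri x y u), hinv x y u z, A.tri_skew z u x]
      simp
    intro x y z u
    simp only [LinearMap.add_apply, LinearMap.comp_apply, LinearMap.compl₂_apply,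
      hP2, map_add, LinearMap.add_apply]
    rw [key (Pd x) y z u, key x (Pd y) z u, key x y (Pd z) u,
      key x y z (Pd u)]
    ring
end

section
/- Let (T,*,[[·,·,·]],b) be a quadratic left Bol algebra over ℝ and let Π: T → T be a pseudoderivation of T with companion χ ∈ T. Define φ(Π)(x,y) := b(Π(x),y) + b(x,Π(y)). Then φ(Π) satisfies the associativity condition φ(Π)(x*y,z) = φ(Π)(x,y*z) for all x,y,z ∈ T if and only if for every w ∈ T the endomorphism ℛ_χ(w): T → T defined by ℛ_χ(w)(z) := [[z,w,χ]] - (z*w)*χ is b-skew-symmetric, i.e. b(ℛ_χ(w)(z),y) = -b(z,ℛ_χ(w)(y)) for all y,z ∈ T. -/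
/-- Let (T,*,[[·,·,·]],b) be a quadratic left Bol algebra and Π (written `Pd`) a
pseudoderivation with companion χ, and φ(Π)(x,y) := b(Π(x),y) + b(x,Π(y)).  Then φ(Π)
satisfies the associativity condition φ(Π)(x*y,z) = φ(Π)(x,y*z) if and only if for every
w ∈ T the endomorphism ℛ_χ(w) : z ↦ [[z,w,χ]] - (z*w)*χ is b-skew-symmetric. -/
theorem phi_assoc_iff_Rchi_skew
    {T : Type*} [AddCommGroup T] [Module ℝ T] (A : LeftBolAlgebra T)
    (b : LinearMap.BilinForm ℝ T) (hsymm : ∀ x y : T, b x y = b y x)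
    (hnondeg : ∀ x : T, (∀ y : T, b x y = 0) → x = 0)
    (hassoc : ∀ x y z : T, b (A.mul x y) z = b x (A.mul y z))
    (hinv : ∀ x y z u : T, b (A.tri x y z) u = b (A.tri z u x) y)
    (Pd : T →ₗ[ℝ] T) (χ : T)
    (hP1 : ∀ x y : T, Pd (A.mul x y) =
      A.mul (Pd x) y + A.mul x (Pd y) + A.tri x y χ - A.mul (A.mul x y) χ)
    (hP2 : ∀ x y z : T, Pd (A.tri x y z) =
      A.tri (Pd x) y z + A.tri x (Pd y) z + A.tri x y (Pd z)) :
    (∀ x y z : T,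
        b (Pd (A.mul x y)) z + b (A.mul x y) (Pd z) =
          b (Pd x) (A.mul y z) + b x (Pd (A.mul y z))) ↔
      (∀ w z y : T,
        b (A.tri z w χ - A.mul (A.mul z w) χ) y =
          - b z (A.tri y w χ - A.mul (A.mul y w) χ)) := by
  set S : T → T → T := fun x y => A.tri x y χ - A.mul (A.mul x y) χ with hSdef
  have hS : ∀ x y : T, S x y = - S y x := by
    intro x y
    simp only [hSdef]
    rw [A.tri_skew x y χ, A.mul_anticomm x y]
    simp
    abel
  have key : ∀ x y z : T,
      (b (Pd (A.mul x y)) z + b (A.mul x y) (Pd z) =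
          b (Pd x) (A.mul y z) + b x (Pd (A.mul y z))) ↔
      b (S x y) z = b x (S y z) := by
    intro x y z
    rw [hP1 x y, hP1 y z]
    simp only [hSdef, map_add, map_sub, LinearMap.add_apply, LinearMap.sub_apply]
    constructor <;> intro h <;>
      nlinarith [hassoc (Pd x) y z, hassoc x (Pd y) z, hassoc x y (Pd z), h]
  constructor
  · intro h w z y
    have hA : ∀ x y z : T, b (S x y) z = b x (S y z) := fun x y z => (key x y z).mp (h x y z)
    calc b (S z w) y = b z (S w y) := hA z w y
      _ = - b z (S y w) := by rw [hS w y]; simp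
  · intro h x y z
    rw [key x y z]
    have h2 : b (S x y) z = - b x (S z y) := h y x z
    rw [h2, hS z y]
    simp
end

section
/- Let (T,[[·,·,·]]) be a Lie triple system over ℝ and (V,θ,D_θ) a representation of it. On the dual space V*, define θ'(x,y)(f) := f∘θ(y,x) and D'(x,y)(f) := -f∘D_θ(x,y) for f ∈ V*. Then (V*,θ',D') is a representation of (T,[[·,·,·]]), i.e. θ' and D' satisfy (R1), (R31), (R32), (R33). -/
/-- The dual map θ'(x,y) : V* → V*, θ'(x,y)(f) = f ∘ θ(y,x). -/
def dualTheta {T V : Type*} [AddCommGroup T] [Module ℝ T] [AddCommGroup V] [Module ℝ V]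
    (θ : T →ₗ[ℝ] T →ₗ[ℝ] Module.End ℝ V) (x y : T) :
    Module.End ℝ (Module.Dual ℝ V) :=
  (θ y x).dualMap

/-- The dual map D'(x,y) : V* → V*, D'(x,y)(f) = -f ∘ D(x,y). -/
def dualD {T V : Type*} [AddCommGroup T] [Module ℝ T] [AddCommGroup V] [Module ℝ V]
    (D : T →ₗ[ℝ] T →ₗ[ℝ] Module.End ℝ V) (x y : T) :
    Module.End ℝ (Module.Dual ℝ V) :=
  - (D x y).dualMap

/-- If (V,θ,D_θ) is a representation of a Lie triple system (T,[[·,·,·]]), then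
(V*,θ',D') with θ'(x,y)(f) = f∘θ(y,x) and D'(x,y)(f) = -f∘D_θ(x,y) is again a
representation, i.e. it satisfies (R1), (R31), (R32) and (R33). -/
theorem dual_representation_of_lts
    {T V : Type*} [AddCommGroup T] [Module ℝ T] [AddCommGroup V] [Module ℝ V]
    (L : LieTripleSystem T)
    (θ D : T →ₗ[ℝ] T →ₗ[ℝ] Module.End ℝ V)
    (hR1 : ∀ x y : T, D x y + θ x y - θ y x = 0)
    (hR31 : ∀ u v x y : T, D u v * D x y - D x y * D u v =
      D (L.tri u v x) y + D x (L.tri u v y))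
    (hR32 : ∀ u v x y : T, D u v * θ x y - θ x y * D u v =
      θ (L.tri u v x) y + θ x (L.tri u v y))
    (hR33 : ∀ u x y z : T, θ u (L.tri x y z) =
      θ y z * θ u x - θ x z * θ u y + D x y * θ u z) :
    (∀ x y : T, dualD D x y + dualTheta θ x y - dualTheta θ y x = 0) ∧
    (∀ u v x y : T, dualD D u v * dualD D x y - dualD D x y * dualD D u v =
      dualD D (L.tri u v x) y + dualD D x (L.tri u v y)) ∧
    (∀ u v x y : T, dualD D u v * dualTheta θ x y - dualTheta θ x y * dualD D u v =
      dualTheta θ (L.tri u v x) y + dualTheta θ x (L.tri u v y)) ∧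
    (∀ u x y z : T, dualTheta θ u (L.tri x y z) =
      dualTheta θ y z * dualTheta θ u x - dualTheta θ x z * dualTheta θ u y +
        dualD D x y * dualTheta θ u z) := by

  refine ⟨?_, ?_, ?_, ?_⟩
  · intro x y
    ext f v
    have h := congrArg f (LinearMap.congr_fun (hR1 x y) v)
    simp only [LinearMap.add_apply, LinearMap.sub_apply, LinearMap.zero_apply, map_add,
      map_sub, map_zero] at h
    simp only [dualD, dualTheta, LinearMap.add_apply, LinearMap.sub_apply,
      LinearMap.neg_apply, LinearMap.dualMap_apply, LinearMap.zero_apply,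
      LinearMap.coe_comp, Function.comp_apply]
    linarith
  · intro u v x y
    ext f w
    have h := congrArg f (LinearMap.congr_fun (hR31 u v x y) w)
    simp only [LinearMap.add_apply, LinearMap.sub_apply, Module.End.mul_apply, map_add,
      map_sub] at h
    simp only [dualD, dualTheta, LinearMap.add_apply, LinearMap.sub_apply,
      LinearMap.neg_apply, Module.End.mul_apply, LinearMap.dualMap_apply, map_neg,
      LinearMap.coe_comp, Function.comp_apply]
    linarith
  · intro u v x y
    ext f w
    have h := congrArg f (LinearMap.congr_fun (hR32 u v y x) w)
    simp only [LinearMap.add_apply, LinearMap.sub_apply, Module.End.mul_apply, map_add,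
      map_sub] at h
    simp only [dualD, dualTheta, LinearMap.add_apply, LinearMap.sub_apply,
      LinearMap.neg_apply, Module.End.mul_apply, LinearMap.dualMap_apply, map_neg,
      LinearMap.coe_comp, Function.comp_apply]
    linarith
  · intro u x y z
    ext f w
    have h32 := congrArg f (LinearMap.congr_fun (hR32 x y z u) w)
    have h33 := congrArg f (LinearMap.congr_fun (hR33 z x y u) w)
    simp only [LinearMap.add_apply, LinearMap.sub_apply, Module.End.mul_apply, map_add,
      map_sub] at h32 h33
    simp only [dualD, dualTheta, LinearMap.add_apply, LinearMap.sub_apply,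
      LinearMap.neg_apply, Module.End.mul_apply, LinearMap.dualMap_apply, map_neg,
      LinearMap.coe_comp, Function.comp_apply]
    linarith
end

section
/- Let T = ℝ² with basis e₁, e₂ and let [[·,·,·]] be the unique trilinear operation on T satisfying [[x,y,z]] = -[[y,x,z]] and [[e₁,e₂,e₁]] = e₁, [[e₁,e₂,e₂]] = -e₂. Then (T,[[·,·,·]]) is a Lie triple system, and for any α ∈ ℝ with α ≠ 0, the symmetric bilinear form b on T determined by b(e₁,e₁) = 0 = b(e₂,e₂) and b(e₁,e₂) = α is nondegenerate and right invariant (b([[x,y,z]],u) = b([[z,u,x]],y) for all x,y,z,u ∈ T); hence (T,b) is a quadratic Lie triple system. -/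
/-- Let T = ℝ² with basis e₁ = (1,0), e₂ = (0,1), and let [[·,·,·]] be the (unique)
trilinear operation on T satisfying [[x,y,z]] = -[[y,x,z]], [[e₁,e₂,e₁]] = e₁ and
[[e₁,e₂,e₂]] = -e₂.  Then (T,[[·,·,·]]) is a Lie triple system (it also satisfies (T1)
and (T2)), and for every α ≠ 0 the symmetric bilinear form b with b(e₁,e₁) = 0 = b(e₂,e₂)
and b(e₁,e₂) = α is nondegenerate and right invariant; hence (T,b) is a quadratic Lie
triple system. -/
theorem example_two_dim_quadratic_lts
    (tri : (Fin 2 → ℝ) →ₗ[ℝ] (Fin 2 → ℝ) →ₗ[ℝ] (Fin 2 → ℝ) →ₗ[ℝ] (Fin 2 → ℝ))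
    (hskew : ∀ x y z : Fin 2 → ℝ, tri x y z = - tri y x z)
    (h1 : tri ![1, 0] ![0, 1] ![1, 0] = ![1, 0])
    (h2 : tri ![1, 0] ![0, 1] ![0, 1] = -![0, 1])
    (α : ℝ) (hα : α ≠ 0)
    (b : LinearMap.BilinForm ℝ (Fin 2 → ℝ))
    (hbsymm : ∀ x y : Fin 2 → ℝ, b x y = b y x)
    (hb11 : b ![1, 0] ![1, 0] = 0) (hb22 : b ![0, 1] ![0, 1] = 0)
    (hb12 : b ![1, 0] ![0, 1] = α) :
    (∀ x y z : Fin 2 → ℝ, tri x y z + tri y z x + tri z x y = 0) ∧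
    (∀ u v x y z : Fin 2 → ℝ, tri u v (tri x y z) =
      tri (tri u v x) y z + tri x (tri u v y) z + tri x y (tri u v z)) ∧
    (∀ x : Fin 2 → ℝ, (∀ y : Fin 2 → ℝ, b x y = 0) → x = 0) ∧
    (∀ x y z u : Fin 2 → ℝ, b (tri x y z) u = b (tri z u x) y) := by
  have hdec : ∀ x : Fin 2 → ℝ, x = x 0 • ![(1:ℝ), 0] + x 1 • ![(0:ℝ), 1] := by
    intro x
    funext i
    fin_cases i <;> simp
  have hself : ∀ x z : Fin 2 → ℝ, tri x x z = 0 := by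
    intro x z
    have h := hskew x x z
    have h2 : (2:ℝ) • tri x x z = 0 := by
      rw [two_smul]; nth_rewrite 1 [h]; abel
    simpa using (smul_eq_zero.mp h2).resolve_left (by norm_num)
  have h1' : tri ![(0:ℝ),1] ![(1:ℝ),0] ![(1:ℝ),0] = -![(1:ℝ),0] := by
    rw [hskew, h1]
  have h2' : tri ![(0:ℝ),1] ![(1:ℝ),0] ![(0:ℝ),1] = ![(0:ℝ),1] := by
    rw [hskew, h2]; simp
  have htri : ∀ x y z : Fin 2 → ℝ,
      tri x y z = (x 0 * y 1 - x 1 * y 0) • ![z 0, -z 1] := by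
    intro x y z
    conv_lhs => rw [hdec x, hdec y, hdec z]
    simp only [map_add, map_smul, LinearMap.add_apply, LinearMap.smul_apply,
      hself, h1, h2, h1', h2', smul_zero]
    funext i
    fin_cases i <;>
      simp [Matrix.cons_val_zero, Matrix.cons_val_one] <;> ring
  have hb : ∀ x y : Fin 2 → ℝ, b x y = α * (x 0 * y 1 + x 1 * y 0) := by
    intro x y
    have hb21 : b ![(0:ℝ),1] ![(1:ℝ),0] = α := by rw [hbsymm, hb12]
    conv_lhs => rw [hdec x, hdec y]
    simp only [map_add, map_smul, LinearMap.add_apply, LinearMap.smul_apply,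
      hb11, hb22, hb12, hb21, smul_eq_mul]
    ring
  refine ⟨?_, ?_, ?_, ?_⟩
  · intro x y z
    simp only [htri]
    funext i
    fin_cases i <;> simp <;> ring
  · intro u v x y z
    simp only [htri]
    funext i
    fin_cases i <;> simp <;> ring
  · intro x hx
    have e1 := hx ![(1:ℝ),0]
    have e2 := hx ![(0:ℝ),1]
    rw [hb] at e1 e2
    simp at e1 e2
    funext i
    fin_cases i <;> simp [e1.resolve_left hα, e2.resolve_left hα]
  · intro x y z u
    simp only [htri, hb]
    simp only [Matrix.cons_val_zero, Matrix.cons_val_one, Matrix.head_cons, smul_eq_mul,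
      Pi.smul_apply]
    ring
end
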